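/- arXiv:1301.0547 — 5 statements merged into one kernel-verified Lean document; each statement's English description precedes it below -/
import Mathlib

section
/- Let κ ∈ (0,1). The positive solutions d_n of tan(κx) = x, the positive solutions η_n of tan(κx) = −1/x, and the vertical asymptotes θ_n = π(2n−1)/(2κ) of tan(κx) interlace: 0 < d_1 < θ_1 < η_1 < d_2 < θ_2 < η_2 < ⋯, i.e., for every n ≥ 1 there is exactly one solution d_n of tan(κx)=x in (θ_{n−1}, θ_n) (with θ_0 = 0) and exactly one solution η_n of tan(κx) = −1/x in (θ_n, θ_{n+1}), and d_n < θ_n < η_n < d_{n+1}. -/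
open Real Set

noncomputable def theta (κ : ℝ) (n : ℕ) : ℝ := (2 * (n : ℝ) - 1) * Real.pi / (2 * κ)

namespace Stmt5

noncomputable def F (κ x : ℝ) : ℝ := κ * x - Real.arctan x

noncomputable def x0 (κ : ℝ) : ℝ := Real.sqrt (1/κ - 1)

lemma x0_pos {κ : ℝ} (hκ₀ : 0 < κ) (hκ₁ : κ < 1) : 0 < x0 κ := by
  apply Real.sqrt_pos.2
  rw [sub_pos, lt_div_iff₀ hκ₀]
  linarith

lemma x0_sq {κ : ℝ} (hκ₀ : 0 < κ) (hκ₁ : κ < 1) : (x0 κ) ^ 2 = 1/κ - 1 := by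
  apply Real.sq_sqrt
  rw [sub_nonneg, le_div_iff₀ hκ₀]
  linarith

lemma hF_deriv (κ x : ℝ) : HasDerivAt (F κ) (κ - 1/(1 + x^2)) x := by
  have h := ((hasDerivAt_id x).const_mul κ).sub (Real.hasDerivAt_arctan x)
  simp only [id, mul_one, one_div] at h ⊢
  exact h

lemma hF_cont (κ : ℝ) : Continuous (F κ) :=
  (continuous_const.mul continuous_id).sub Real.continuous_arctan

lemma F_mono {κ : ℝ} (hκ₀ : 0 < κ) (hκ₁ : κ < 1) : StrictMonoOn (F κ) (Ici (x0 κ)) := by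
  apply strictMonoOn_of_deriv_pos (convex_Ici _) (hF_cont κ).continuousOn
  intro x hx
  rw [interior_Ici, mem_Ioi] at hx
  rw [(hF_deriv κ x).deriv]
  have hx0 : 0 < x0 κ := x0_pos hκ₀ hκ₁
  have h1 : 1/κ - 1 < x ^ 2 := by
    rw [← x0_sq hκ₀ hκ₁]
    exact pow_lt_pow_left₀ hx hx0.le two_ne_zero
  have h2 : 1/κ < 1 + x^2 := by linarith
  have h3 : 1/(1 + x^2) < κ := by
    rw [div_lt_iff₀ (by positivity)]
    rw [div_lt_iff₀ hκ₀] at h2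
    nlinarith
  linarith

lemma F_anti {κ : ℝ} (hκ₀ : 0 < κ) (hκ₁ : κ < 1) : StrictAntiOn (F κ) (Icc 0 (x0 κ)) := by
  apply strictAntiOn_of_deriv_neg (convex_Icc _ _) (hF_cont κ).continuousOn
  intro x hx
  rw [interior_Icc, mem_Ioo] at hx
  rw [(hF_deriv κ x).deriv]
  have h1 : x ^ 2 < 1/κ - 1 := by
    rw [← x0_sq hκ₀ hκ₁]
    exact pow_lt_pow_left₀ hx.2 hx.1.le two_ne_zero
  have h2 : 1 + x^2 < 1/κ := by linarith
  have h3 : κ < 1/(1 + x^2) := by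
    rw [lt_div_iff₀ (by positivity)]
    rw [lt_div_iff₀ hκ₀] at h2
    nlinarith
  linarith

end Stmt5

namespace Stmt5

lemma k_theta {κ : ℝ} (hκ₀ : 0 < κ) (n : ℕ) :
    κ * theta κ n = (2 * (n : ℝ) - 1) * Real.pi / 2 := by
  unfold theta
  field_simp

lemma theta_pos {κ : ℝ} (hκ₀ : 0 < κ) {n : ℕ} (hn : 1 ≤ n) : 0 < theta κ n := by
  have h : (1 : ℝ) ≤ (n : ℝ) := by exact_mod_cast hn
  have hπ := Real.pi_pos
  apply div_pos (by nlinarith) (by linarith)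

lemma theta_lt {κ : ℝ} (hκ₀ : 0 < κ) {m n : ℕ} (h : m < n) : theta κ m < theta κ n := by
  have h' : (m : ℝ) < (n : ℝ) := by exact_mod_cast h
  have hπ := Real.pi_pos
  apply div_lt_div_of_pos_right (by nlinarith) (by linarith)

lemma x0_lt_theta1 {κ : ℝ} (hκ₀ : 0 < κ) (hκ₁ : κ < 1) : x0 κ < theta κ 1 := by
  have hπ := Real.pi_gt_three
  have hθ : theta κ 1 = Real.pi / (2 * κ) := by unfold theta; norm_num
  rw [x0, hθ, show Real.sqrt (1/κ - 1) < Real.pi / (2*κ) ↔ _ from Real.sqrt_lt' (by positivity)]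
  rw [div_pow, lt_div_iff₀ (by positivity), sub_mul]
  have : (2*κ)^2 = 4*κ^2 := by ring
  have h4 : 4*κ^2*(1/κ) = 4*κ := by field_simp
  nlinarith [sq_nonneg (1 - 2*κ)]

lemma F_theta {κ : ℝ} (hκ₀ : 0 < κ) (n : ℕ) :
    F κ (theta κ n) = (2 * (n : ℝ) - 1) * Real.pi / 2 - Real.arctan (theta κ n) := by
  rw [F, k_theta hκ₀]

lemma F_zero (κ : ℝ) : F κ 0 = 0 := by simp [F]

/-- Existence of the root of `F = (n-1)π` in the right interval. -/
lemma exD {κ : ℝ} (hκ₀ : 0 < κ) (hκ₁ : κ < 1) (n : ℕ) (hn : 1 ≤ n) :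
    ∃ x, x ∈ Ioo (if n = 1 then 0 else theta κ (n - 1)) (theta κ n) ∧
      F κ x = ((n : ℝ) - 1) * Real.pi ∧ x0 κ < x := by
  have hπ := Real.pi_pos
  rcases eq_or_lt_of_le hn with h1 | h2
  · -- n = 1
    subst_eqs
    simp only [Nat.cast_one, if_pos rfl]
    have hx0 := x0_pos hκ₀ hκ₁
    have hlt := x0_lt_theta1 hκ₀ hκ₁
    have hFx0 : F κ (x0 κ) < 0 := by
      have := F_anti hκ₀ hκ₁ (left_mem_Icc.2 hx0.le) (right_mem_Icc.2 hx0.le) hx0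
      rwa [F_zero] at this
    have hFθ : 0 < F κ (theta κ 1) := by
      rw [F_theta hκ₀]
      have := Real.arctan_lt_pi_div_two (theta κ 1)
      push_cast
      linarith
    obtain ⟨x, hx, hFx⟩ := intermediate_value_Ioo hlt.le (hF_cont κ).continuousOn
      (show (0:ℝ) ∈ Ioo (F κ (x0 κ)) (F κ (theta κ 1)) from ⟨hFx0, hFθ⟩)
    exact ⟨x, ⟨hx0.trans hx.1, hx.2⟩, by rw [hFx]; push_cast; ring, hx.1⟩
  · -- n ≥ 2
    have hn2 : 2 ≤ n := h2
    have hne : n ≠ 1 := by omega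
    have hcast : ((n - 1 : ℕ) : ℝ) = (n : ℝ) - 1 := by
      have : 1 ≤ n := hn; push_cast [this]; ring
    have hlt : theta κ (n-1) < theta κ n := theta_lt hκ₀ (by omega)
    have hx0lt : x0 κ < theta κ (n-1) := by
      rcases eq_or_lt_of_le (show 1 ≤ n - 1 by omega) with h | h
      · rw [← h]; exact x0_lt_theta1 hκ₀ hκ₁
      · exact (x0_lt_theta1 hκ₀ hκ₁).trans (theta_lt hκ₀ h)
    have hFlo : F κ (theta κ (n-1)) < ((n : ℝ) - 1) * Real.pi := by
      rw [F_theta hκ₀, hcast]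
      have := Real.neg_pi_div_two_lt_arctan (theta κ (n-1))
      linarith
    have hFhi : ((n : ℝ) - 1) * Real.pi < F κ (theta κ n) := by
      rw [F_theta hκ₀]
      have := Real.arctan_lt_pi_div_two (theta κ n)
      linarith
    obtain ⟨x, hx, hFx⟩ := intermediate_value_Ioo hlt.le (hF_cont κ).continuousOn
      (show ((n:ℝ)-1) * Real.pi ∈ Ioo _ _ from ⟨hFlo, hFhi⟩)
    exact ⟨x, by rw [if_neg hne]; exact hx, hFx, hx0lt.trans hx.1⟩

/-- Existence of the root of `F = (2n-1)π/2` in `(θ n, θ (n+1))`. -/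
lemma exH {κ : ℝ} (hκ₀ : 0 < κ) (hκ₁ : κ < 1) (n : ℕ) (hn : 1 ≤ n) :
    ∃ x, x ∈ Ioo (theta κ n) (theta κ (n + 1)) ∧
      F κ x = (2 * (n : ℝ) - 1) * Real.pi / 2 ∧ x0 κ < x := by
  have hπ := Real.pi_pos
  have hlt : theta κ n < theta κ (n+1) := theta_lt hκ₀ (by omega)
  have hx0lt : x0 κ < theta κ n := by
    rcases eq_or_lt_of_le hn with h | h
    · rw [← h]; exact x0_lt_theta1 hκ₀ hκ₁
    · exact (x0_lt_theta1 hκ₀ hκ₁).trans (theta_lt hκ₀ h)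
  have hFlo : F κ (theta κ n) < (2 * (n:ℝ) - 1) * Real.pi / 2 := by
    rw [F_theta hκ₀]
    have : 0 < Real.arctan (theta κ n) := by simpa using Real.arctan_strictMono (theta_pos hκ₀ hn)
    linarith
  have hFhi : (2 * (n:ℝ) - 1) * Real.pi / 2 < F κ (theta κ (n+1)) := by
    rw [F_theta hκ₀]
    have := Real.arctan_lt_pi_div_two (theta κ (n+1))
    push_cast
    linarith
  obtain ⟨x, hx, hFx⟩ := intermediate_value_Ioo hlt.le (hF_cont κ).continuousOn
    (show (2*(n:ℝ)-1) * Real.pi / 2 ∈ Ioo _ _ from ⟨hFlo, hFhi⟩)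
  exact ⟨x, hx, hFx, hx0lt.trans hx.1⟩

/-- If `F x = (n-1)π` then `tan (κ x) = x`. -/
lemma tan_of_FD {κ x : ℝ} {n : ℕ} (hn : 1 ≤ n) (hF : F κ x = ((n : ℝ) - 1) * Real.pi) :
    Real.tan (κ * x) = x := by
  have hx : κ * x = Real.arctan x + ((n - 1 : ℕ) : ℝ) * Real.pi := by
    have : ((n - 1 : ℕ) : ℝ) = (n : ℝ) - 1 := by push_cast [hn]; ring
    rw [this]; rw [F] at hF; linarith
  rw [hx, Real.tan_periodic.nat_mul (n-1) (Real.arctan x), Real.tan_arctan]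

/-- If `tan (κ x) = x` and `x` lies in the right interval, then `F x = (n-1)π`. -/
lemma FD_of_tan {κ x : ℝ} (hκ₀ : 0 < κ) {n : ℕ} (hn : 1 ≤ n)
    (hx : x ∈ Ioo (if n = 1 then 0 else theta κ (n - 1)) (theta κ n))
    (ht : Real.tan (κ * x) = x) : F κ x = ((n : ℝ) - 1) * Real.pi := by
  have hπ := Real.pi_pos
  have hcast : ((n - 1 : ℕ) : ℝ) = (n : ℝ) - 1 := by push_cast [hn]; ring
  have hup : κ * x < ((n:ℝ) - 1) * Real.pi + Real.pi / 2 := by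
    have := mul_lt_mul_of_pos_left hx.2 hκ₀
    rw [k_theta hκ₀] at this
    push_cast at this ⊢
    linarith
  have hlo : ((n:ℝ) - 1) * Real.pi - Real.pi / 2 < κ * x := by
    rcases eq_or_lt_of_le hn with h1 | h2
    · have : (0:ℝ) < x := by
        have := hx.1; rw [if_pos h1.symm] at this; exact this
      have : 0 < κ * x := mul_pos hκ₀ this
      rw [← h1]; push_cast; linarith
    · have hne : n ≠ 1 := by omega
      have h := mul_lt_mul_of_pos_left (by rw [if_neg hne] at hx; exact hx.1) hκ₀
      rw [k_theta hκ₀] at h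
      have hc2 : ((n - 1 : ℕ) : ℝ) = (n : ℝ) - 1 := hcast
      rw [hc2] at h
      linarith
  have key : Real.arctan x = κ * x - ((n-1:ℕ) : ℝ) * Real.pi := by
    have h1 : Real.tan (κ * x - ((n-1:ℕ):ℝ) * Real.pi) = x := by
      rw [Real.tan_periodic.sub_nat_mul_eq (n-1), ht]
    have h2 := Real.arctan_tan (x := κ*x - ((n-1:ℕ):ℝ)*Real.pi)
      (by rw [hcast]; linarith) (by rw [hcast]; linarith)
    rw [h1] at h2
    exact h2
  rw [F, key, hcast]; ring

/-- If `F x = (2n-1)π/2` and `x > 0` then `tan (κ x) = -1/x`. -/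
lemma tan_of_FH {κ x : ℝ} {n : ℕ} (hxpos : 0 < x)
    (hF : F κ x = (2 * (n : ℝ) - 1) * Real.pi / 2) :
    Real.tan (κ * x) = -1 / x := by
  have hx : κ * x = (Real.arctan x - Real.pi / 2) + (n : ℝ) * Real.pi := by
    rw [F] at hF; push_cast; linarith
  have hper : ((n:ℝ) : ℝ) * Real.pi = ((n:ℕ) : ℝ) * Real.pi := by norm_num
  rw [hx, Real.tan_periodic.nat_mul n (Real.arctan x - Real.pi / 2)]
  rw [show Real.arctan x - Real.pi / 2 = -(Real.pi / 2 - Real.arctan x) by ring,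
    Real.tan_neg, Real.tan_pi_div_two_sub, Real.tan_arctan]
  rw [neg_div, one_div]

/-- If `tan (κ x) = -1/x` and `x ∈ (θ n, θ (n+1))`, then `F x = (2n-1)π/2`. -/
lemma FH_of_tan {κ x : ℝ} (hκ₀ : 0 < κ) {n : ℕ} (hn : 1 ≤ n)
    (hx : x ∈ Ioo (theta κ n) (theta κ (n + 1)))
    (ht : Real.tan (κ * x) = -1 / x) : F κ x = (2 * (n : ℝ) - 1) * Real.pi / 2 := by
  have hπ := Real.pi_pos
  have hxpos : 0 < x := (theta_pos hκ₀ hn).trans hx.1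
  have hlo : (n:ℝ) * Real.pi - Real.pi / 2 < κ * x := by
    have := mul_lt_mul_of_pos_left hx.1 hκ₀
    rw [k_theta hκ₀] at this
    linarith
  have hup : κ * x < (n:ℝ) * Real.pi + Real.pi / 2 := by
    have := mul_lt_mul_of_pos_left hx.2 hκ₀
    rw [k_theta hκ₀] at this
    push_cast at this
    linarith
  have h1 : Real.tan (κ * x - (n:ℕ) * Real.pi) = -1 / x := by
    rw [Real.tan_periodic.sub_nat_mul_eq n, ht]
  have h2 := Real.arctan_tan (x := κ*x - ((n:ℕ):ℝ)*Real.pi)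
    (by push_cast; linarith) (by push_cast; linarith)
  rw [h1] at h2
  have h3 : Real.arctan (-1 / x) = Real.arctan x - Real.pi / 2 := by
    rw [neg_div, one_div, Real.arctan_neg, Real.arctan_inv_of_pos hxpos]
    ring
  rw [h3] at h2
  rw [F]
  push_cast at h2
  linarith

lemma x0_lt_theta {κ : ℝ} (hκ₀ : 0 < κ) (hκ₁ : κ < 1) {m : ℕ} (hm : 1 ≤ m) :
    x0 κ < theta κ m := by
  rcases eq_or_lt_of_le hm with h | h
  · rw [← h]; exact x0_lt_theta1 hκ₀ hκ₁
  · exact (x0_lt_theta1 hκ₀ hκ₁).trans (theta_lt hκ₀ h)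

end Stmt5

theorem stmt_5 (κ : ℝ) (hκ₀ : 0 < κ) (hκ₁ : κ < 1) :
    ∃ d η : ℕ → ℝ,
      (∀ n : ℕ, 1 ≤ n →
        -- d n is the unique solution of tan(κ x) = x in (θ (n-1), θ n), with θ 0 := 0
        (d n ∈ Ioo (if n = 1 then 0 else theta κ (n - 1)) (theta κ n) ∧
          Real.tan (κ * d n) = d n ∧
          (∀ x ∈ Ioo (if n = 1 then 0 else theta κ (n - 1)) (theta κ n),
            Real.tan (κ * x) = x → x = d n)) ∧
        -- η n is the unique solution of tan(κ x) = -1/x in (θ n, θ (n+1))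
        (η n ∈ Ioo (theta κ n) (theta κ (n + 1)) ∧
          Real.tan (κ * η n) = -1 / η n ∧
          (∀ x ∈ Ioo (theta κ n) (theta κ (n + 1)),
            Real.tan (κ * x) = -1 / x → x = η n)) ∧
        -- interlacing: 0 < d 1 and d n < θ n < η n < d (n+1)
        (0 < d n ∧ d n < theta κ n ∧ theta κ n < η n ∧ η n < d (n + 1))) := by
  classical
  have hπ := Real.pi_pos
  set D : ℕ → ℝ := fun n => if h : 1 ≤ n then (Stmt5.exD hκ₀ hκ₁ n h).choose else 0 with hD
  set H : ℕ → ℝ := fun n => if h : 1 ≤ n then (Stmt5.exH hκ₀ hκ₁ n h).choose else 0 with hH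
  have hDspec : ∀ n (hn : 1 ≤ n),
      D n ∈ Ioo (if n = 1 then 0 else theta κ (n - 1)) (theta κ n) ∧
      Stmt5.F κ (D n) = ((n : ℝ) - 1) * Real.pi ∧ Stmt5.x0 κ < D n := by
    intro n hn
    simp only [hD, dif_pos hn]
    exact (Stmt5.exD hκ₀ hκ₁ n hn).choose_spec
  have hHspec : ∀ n (hn : 1 ≤ n),
      H n ∈ Ioo (theta κ n) (theta κ (n + 1)) ∧
      Stmt5.F κ (H n) = (2 * (n : ℝ) - 1) * Real.pi / 2 ∧ Stmt5.x0 κ < H n := by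
    intro n hn
    simp only [hH, dif_pos hn]
    exact (Stmt5.exH hκ₀ hκ₁ n hn).choose_spec
  have hmono := Stmt5.F_mono hκ₀ hκ₁
  refine ⟨D, H, fun n hn => ?_⟩
  obtain ⟨hd1, hd2, hd3⟩ := hDspec n hn
  obtain ⟨hd1', hd2', hd3'⟩ := hDspec (n+1) (by omega)
  obtain ⟨hh1, hh2, hh3⟩ := hHspec n hn
  have hx0pos := Stmt5.x0_pos hκ₀ hκ₁
  refine ⟨⟨hd1, Stmt5.tan_of_FD hn hd2, ?_⟩,
    ⟨hh1, Stmt5.tan_of_FH (hx0pos.trans hh3) hh2, ?_⟩,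
    hx0pos.trans hd3, hd1.2, hh1.1, ?_⟩
  · -- uniqueness of d
    intro x hx htan
    have hFx := Stmt5.FD_of_tan hκ₀ hn hx htan
    have hx0x : Stmt5.x0 κ < x := by
      by_cases h1 : n = 1
      · subst h1
        rw [if_pos rfl] at hx
        by_contra hcon
        push_neg at hcon
        have h0 : Stmt5.F κ x < 0 := by
          have := Stmt5.F_anti hκ₀ hκ₁ (left_mem_Icc.2 hx0pos.le) ⟨hx.1.le, hcon⟩ hx.1
          rwa [Stmt5.F_zero] at this
        rw [hFx] at h0
        norm_num at h0
      · rw [if_neg h1] at hx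
        exact (Stmt5.x0_lt_theta hκ₀ hκ₁ (by omega : 1 ≤ n - 1)).trans hx.1
    exact hmono.injOn hx0x.le hd3.le (hFx.trans hd2.symm)
  · -- uniqueness of η
    intro x hx htan
    have hFx := Stmt5.FH_of_tan hκ₀ hn hx htan
    have hx0x : Stmt5.x0 κ < x := (Stmt5.x0_lt_theta hκ₀ hκ₁ hn).trans hx.1
    exact hmono.injOn hx0x.le hh3.le (hFx.trans hh2.symm)
  · -- η n < D (n+1)
    have hlt : Stmt5.F κ (H n) < Stmt5.F κ (D (n+1)) := by
      rw [hh2, hd2']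
      push_cast
      linarith
    exact (hmono.lt_iff_lt hh3.le hd3'.le).1 hlt
end

section
/- Let 0 < r_b < R, δ > 0, and let A(L) = {n : α_n ≤ L} where α_n are the solutions (in increasing order) of tan(√α(R−r_b)) = R√α listed via the substitution x = R√α as solutions of tan(κx) = x with κ = 1 − r_b/R. Then for L ≥ δ, C₁√L ≤ |A(L)| ≤ C₂√L with C₁ = (R−r_b)/π − 1/√δ and C₂ = (R−r_b)/π + 1/√δ. -/
open Real Set Filter Topology

private lemma aux_cos_ne {κ : ℝ} (hκ : 0 < κ) (k : ℕ) {x : ℝ}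
    (h1 : (k : ℝ) * π ≤ x * κ) (h2 : x * κ < (k : ℝ) * π + π / 2) :
    Real.cos (x * κ) ≠ 0 := by
  intro h0
  obtain ⟨n, hn⟩ := Real.cos_eq_zero_iff.1 h0
  have hπ := Real.pi_pos
  rw [hn] at h1 h2
  have hkn : (k : ℝ) ≤ (n : ℝ) := by
    have h3 : (k : ℝ) < (n : ℝ) + 1 := by nlinarith
    have h4 : (k : ℤ) < n + 1 := by exact_mod_cast h3
    exact_mod_cast Int.lt_add_one_iff.mp h4
  nlinarith

private lemma aux_mono {κ : ℝ} (hκ : 0 < κ) (k : ℕ) :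
    StrictMonoOn (fun x => Real.tan (x * κ) / x)
      (Ioo ((k : ℝ) * π / κ) (((k : ℝ) * π + π / 2) / κ)) := by
  have hπ := Real.pi_pos
  have ha0 : (0 : ℝ) ≤ (k : ℝ) * π / κ := div_nonneg (by positivity) hκ.le
  have key : ∀ x ∈ Ioo ((k : ℝ) * π / κ) (((k : ℝ) * π + π / 2) / κ),
      HasDerivAt (fun x => Real.tan (x * κ) / x)
        ((1 / Real.cos (x * κ) ^ 2 * κ * x - Real.tan (x * κ) * 1) / x ^ 2) x := by
    intro x hx
    have hx0 : 0 < x := lt_of_le_of_lt ha0 hx.1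
    have hl : (k : ℝ) * π < x * κ := (div_lt_iff₀ hκ).mp hx.1
    have hr : x * κ < (k : ℝ) * π + π / 2 := (lt_div_iff₀ hκ).mp hx.2
    have hcos := aux_cos_ne hκ k hl.le hr
    have h1 : HasDerivAt (fun x => Real.tan (x * κ)) (1 / Real.cos (x * κ) ^ 2 * κ) x :=
      by have h := (Real.hasDerivAt_tan hcos).comp x (hasDerivAt_mul_const κ); exact h
    exact h1.div (hasDerivAt_id' x) hx0.ne'
  apply strictMonoOn_of_deriv_pos (convex_Ioo _ _)
  · exact fun x hx => ((key x hx).differentiableAt).continuousAt.continuousWithinAt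
  · rw [interior_Ioo]
    intro x hx
    rw [(key x hx).deriv]
    have hx0 : 0 < x := lt_of_le_of_lt ha0 hx.1
    have hl : (k : ℝ) * π < x * κ := (div_lt_iff₀ hκ).mp hx.1
    have hr : x * κ < (k : ℝ) * π + π / 2 := (lt_div_iff₀ hκ).mp hx.2
    have hcos := aux_cos_ne hκ k hl.le hr
    have hc2 : 0 < Real.cos (x * κ) ^ 2 := by positivity
    have hxκ : 0 < x * κ := mul_pos hx0 hκ
    have h2 : Real.sin (x * κ) * Real.cos (x * κ) < x * κ := by
      have hs := Real.sin_lt (show 0 < 2 * (x * κ) by linarith)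
      rw [Real.sin_two_mul] at hs
      linarith
    have e : 1 / Real.cos (x * κ) ^ 2 * κ * x - Real.tan (x * κ) * 1
        = (x * κ - Real.sin (x * κ) * Real.cos (x * κ)) / Real.cos (x * κ) ^ 2 := by
      rw [Real.tan_eq_sin_div_cos]
      field_simp
    rw [e]
    exact div_pos (div_pos (by linarith) hc2) (by positivity)

private lemma aux_uniq {κ Rr : ℝ} (hκ : 0 < κ) (k : ℕ) {x y : ℝ}
    (hx : x ∈ Ioo ((k : ℝ) * π / κ) (((k : ℝ) * π + π / 2) / κ))
    (hy : y ∈ Ioo ((k : ℝ) * π / κ) (((k : ℝ) * π + π / 2) / κ))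
    (ex : Real.tan (x * κ) = Rr * x) (ey : Real.tan (y * κ) = Rr * y) : x = y := by
  have hπ := Real.pi_pos
  have ha0 : (0 : ℝ) ≤ (k : ℝ) * π / κ := div_nonneg (by positivity) hκ.le
  have hx0 : 0 < x := lt_of_le_of_lt ha0 hx.1
  have hy0 : 0 < y := lt_of_le_of_lt ha0 hy.1
  have Fx : Real.tan (x * κ) / x = Rr := by
    rw [ex, mul_div_assoc, div_self hx0.ne', mul_one]
  have Fy : Real.tan (y * κ) / y = Rr := by
    rw [ey, mul_div_assoc, div_self hy0.ne', mul_one]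
  rcases lt_trichotomy x y with h | h | h
  · have h2 : Rr < Rr := by
      have := aux_mono hκ k hx hy h
      simpa [Fx, Fy] using this
    exact absurd h2 (lt_irrefl _)
  · exact h
  · have h2 : Rr < Rr := by
      have := aux_mono hκ k hy hx h
      simpa [Fx, Fy] using this
    exact absurd h2 (lt_irrefl _)

private lemma aux_branch {κ Rr : ℝ} (hκ : 0 < κ) (hRr : 0 < Rr) {x : ℝ} (hx0 : 0 < x)
    (hx : Real.tan (x * κ) = Rr * x) :
    x ∈ Ioo ((⌊x * κ / π⌋₊ : ℝ) * π / κ) (((⌊x * κ / π⌋₊ : ℝ) * π + π / 2) / κ) := by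
  have hπ := Real.pi_pos
  set k := ⌊x * κ / π⌋₊ with hk
  have hxκ : 0 < x * κ := mul_pos hx0 hκ
  have h1 : (k : ℝ) ≤ x * κ / π := Nat.floor_le (by positivity)
  have h1' : (k : ℝ) * π ≤ x * κ := (le_div_iff₀ hπ).mp h1
  have h2 : x * κ < ((k : ℝ) + 1) * π := (div_lt_iff₀ hπ).mp (Nat.lt_floor_add_one _)
  have htanpos : 0 < Real.tan (x * κ) := hx ▸ mul_pos hRr hx0
  have hper : Real.tan (x * κ - (k : ℝ) * π) = Real.tan (x * κ) :=
    (Real.tan_periodic.nat_mul k).sub_eq (x * κ)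
  have htank : Real.tan ((k : ℝ) * π) = 0 := by
    have := (Real.tan_periodic.nat_mul k) 0
    simpa using this
  have hlt : (k : ℝ) * π < x * κ := by
    rcases eq_or_lt_of_le h1' with he | he
    · rw [← he, htank] at htanpos
      exact absurd htanpos (lt_irrefl _)
    · exact he
  have hhalf : x * κ < (k : ℝ) * π + π / 2 := by
    by_contra hcon
    push_neg at hcon
    have hu1 : π / 2 ≤ x * κ - (k : ℝ) * π := by linarith
    have hu2 : x * κ - (k : ℝ) * π < π := by linarith
    rcases eq_or_lt_of_le hu1 with he | he
    · rw [← he, Real.tan_pi_div_two] at hper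
      linarith
    · have hs : 0 < Real.sin (x * κ - (k : ℝ) * π) :=
        Real.sin_pos_of_pos_of_lt_pi (by linarith) hu2
      have hc : Real.cos (x * κ - (k : ℝ) * π) < 0 :=
        Real.cos_neg_of_pi_div_two_lt_of_lt he (by linarith)
      have hneg : Real.tan (x * κ - (k : ℝ) * π) < 0 := by
        rw [Real.tan_eq_sin_div_cos]
        exact div_neg_of_pos_of_neg hs hc
      rw [hper] at hneg
      linarith
  exact ⟨(div_lt_iff₀ hκ).mpr hlt, (lt_div_iff₀ hκ).mpr hhalf⟩

private lemma aux_exist {κ Rr : ℝ} (hκ : 0 < κ) (hκR : κ < Rr) (k : ℕ) :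
    ∃ x ∈ Ioo ((k : ℝ) * π / κ) (((k : ℝ) * π + π / 2) / κ), Real.tan (x * κ) = Rr * x := by
  have hπ := Real.pi_pos
  have hRr : 0 < Rr := hκ.trans hκR
  set a := (k : ℝ) * π / κ with hadef
  set b := ((k : ℝ) * π + π / 2) / κ with hbdef
  have ha0 : (0 : ℝ) ≤ a := div_nonneg (by positivity) hκ.le
  have hab : a < b := by
    rw [hadef, hbdef]
    gcongr
    linarith
  have hb0 : 0 < b := lt_of_le_of_lt ha0 hab
  set u := Real.arctan (Rr * b + 1) with hudef
  have hu0 : 0 < u := by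
    have h := Real.arctan_strictMono (show (0 : ℝ) < Rr * b + 1 by positivity)
    rw [Real.arctan_zero] at h; exact h
  have hu2 : u < π / 2 := Real.arctan_lt_pi_div_two _
  set q := ((k : ℝ) * π + u) / κ with hqdef
  have hqb : q < b := by rw [hqdef, hbdef]; gcongr
  have haq : a < q := by rw [hadef, hqdef]; gcongr; linarith
  have hqκ : q * κ = u + (k : ℝ) * π := by
    rw [hqdef]; field_simp; ring
  have htanq : Real.tan (q * κ) = Rr * b + 1 := by
    rw [hqκ, (Real.tan_periodic.nat_mul k) u, hudef, Real.tan_arctan]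
  obtain ⟨p, hap, hpq, hgp⟩ : ∃ p, a ≤ p ∧ p < q ∧ Real.tan (p * κ) < Rr * p := by
    rcases Nat.eq_zero_or_pos k with hk0 | hk0
    · subst hk0
      have hder : HasDerivAt Real.tan 1 0 := by
        have h := Real.hasDerivAt_tan (show Real.cos 0 ≠ 0 by simp)
        simpa using h
      have hslope := hasDerivAt_iff_tendsto_slope.mp hder
      have hlt : (1 : ℝ) < Rr / κ := (one_lt_div hκ).mpr hκR
      have hev : ∀ᶠ y in 𝓝[≠] (0 : ℝ), slope Real.tan 0 y < Rr / κ :=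
        hslope.eventually_lt_const hlt
      have hev2 : ∀ᶠ y in 𝓝[>] (0 : ℝ), slope Real.tan 0 y < Rr / κ :=
        hev.filter_mono (nhdsWithin_mono 0 (fun y hy => ne_of_gt hy))
      have hev3 : Ioo (0 : ℝ) u ∈ 𝓝[>] (0 : ℝ) :=
        Ioo_mem_nhdsGT_of_mem ⟨le_refl 0, hu0⟩
      obtain ⟨y, hy1, hy2⟩ := (hev2.and (eventually_of_mem hev3 (fun y hy => hy))).exists
      have hy0 : 0 < y := hy2.1
      have hyu : y < u := hy2.2
      have hslopey : Real.tan y / y < Rr / κ := by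
        rw [slope_def_field] at hy1
        simpa using hy1
      have htany : Real.tan y < Rr / κ * y := (div_lt_iff₀ hy0).mp hslopey
      refine ⟨y / κ, ?_, ?_, ?_⟩
      · rw [hadef]
        simp
        positivity
      · rw [hqdef]
        gcongr
        simpa using hyu
      · have hyy : y / κ * κ = y := by field_simp
        rw [hyy]
        have heq : Rr / κ * y = Rr * (y / κ) := by ring
        linarith
    · refine ⟨a, le_refl _, haq, ?_⟩
      have haκ : a * κ = (k : ℝ) * π := by rw [hadef]; field_simp
      have htana : Real.tan (a * κ) = 0 := by
        rw [haκ]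
        have := (Real.tan_periodic.nat_mul k) 0
        simpa using this
      rw [htana]
      have hk0' : (0 : ℝ) < (k : ℝ) := by exact_mod_cast hk0
      have ha0' : 0 < a := by rw [hadef]; positivity
      exact mul_pos hRr ha0'
  have hcont : ContinuousOn (fun x => Real.tan (x * κ) - Rr * x) (Icc p q) := by
    intro z hz
    have hz1 : (k : ℝ) * π ≤ z * κ := by
      have haz : a ≤ z := le_trans hap hz.1
      rw [hadef] at haz
      exact (div_le_iff₀ hκ).mp haz
    have hz2 : z * κ < (k : ℝ) * π + π / 2 := by
      have hzq : z * κ ≤ q * κ := mul_le_mul_of_nonneg_right hz.2 hκ.le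
      rw [hqκ] at hzq
      linarith
    have hcos := aux_cos_ne hκ k hz1 hz2
    have hmulc : ContinuousAt (fun x : ℝ => x * κ) z := by fun_prop
    have hct : ContinuousAt (fun x : ℝ => Real.tan (x * κ)) z := by
      have h := ContinuousAt.comp (g := Real.tan) (f := fun x : ℝ => x * κ) (x := z)
        (Real.continuousAt_tan.mpr hcos) hmulc
      exact h
    exact (hct.sub ((continuous_const.mul continuous_id).continuousAt)).continuousWithinAt
  have h0mem : (0 : ℝ) ∈ Ioo (Real.tan (p * κ) - Rr * p) (Real.tan (q * κ) - Rr * q) := by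
    constructor
    · linarith
    · rw [htanq]
      have hq' : Rr * q < Rr * b := by gcongr
      linarith
  obtain ⟨x, hxmem, hgx⟩ := intermediate_value_Ioo (le_of_lt hpq) hcont h0mem
  refine ⟨x, ⟨lt_of_le_of_lt hap hxmem.1, lt_trans hxmem.2 hqb⟩, ?_⟩
  have : Real.tan (x * κ) - Rr * x = 0 := hgx
  linarith [this]

theorem stmt_7 (rb R δ L : ℝ) (hrb : 0 < rb) (hR : rb < R) (hδ : 0 < δ) (hL : δ ≤ L) :
    ((R - rb) / Real.pi - 1 / Real.sqrt δ) * Real.sqrt L ≤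
      ({α : ℝ | 0 < α ∧ Real.tan (Real.sqrt α * (R - rb)) = R * Real.sqrt α ∧
        α ≤ L}.ncard : ℝ) ∧
    ({α : ℝ | 0 < α ∧ Real.tan (Real.sqrt α * (R - rb)) = R * Real.sqrt α ∧
        α ≤ L}.ncard : ℝ) ≤ ((R - rb) / Real.pi + 1 / Real.sqrt δ) * Real.sqrt L := by
  have hπ := Real.pi_pos
  set κ := R - rb with hκdef
  have hκ : 0 < κ := sub_pos.mpr hR
  have hκR : κ < R := sub_lt_self R hrb
  have hR0 : 0 < R := hκ.trans hκR
  have hL0 : 0 < L := lt_of_lt_of_le hδ hL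
  set s := Real.sqrt L with hsdef
  have hs0 : 0 < s := Real.sqrt_pos.mpr hL0
  have hδs : Real.sqrt δ ≤ s := Real.sqrt_le_sqrt hL
  have hδ0 : 0 < Real.sqrt δ := Real.sqrt_pos.mpr hδ
  have hratio : 1 ≤ s / Real.sqrt δ := (one_le_div hδ0).mpr hδs
  set T : Set ℝ := {x : ℝ | 0 < x ∧ Real.tan (x * κ) = R * x ∧ x ≤ s} with hTdef
  have hST : {α : ℝ | 0 < α ∧ Real.tan (Real.sqrt α * κ) = R * Real.sqrt α ∧ α ≤ L}
      = (fun x => x ^ 2) '' T := by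
    ext α
    simp only [hTdef, mem_setOf_eq, mem_image]
    constructor
    · rintro ⟨h1, h2, h3⟩
      exact ⟨Real.sqrt α, ⟨Real.sqrt_pos.mpr h1, h2, Real.sqrt_le_sqrt h3⟩, Real.sq_sqrt h1.le⟩
    · rintro ⟨x, ⟨h1, h2, h3⟩, rfl⟩
      refine ⟨pow_pos h1 2, ?_, ?_⟩
      · rw [Real.sqrt_sq h1.le]; exact h2
      · have h4 : x ^ 2 ≤ s ^ 2 := pow_le_pow_left₀ h1.le h3 2
        rwa [hsdef, Real.sq_sqrt hL0.le] at h4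
  have hcard : {α : ℝ | 0 < α ∧ Real.tan (Real.sqrt α * κ) = R * Real.sqrt α ∧ α ≤ L}.ncard
      = T.ncard := by
    rw [hST]
    apply Set.ncard_image_of_injOn
    intro x hx y hy hxy
    have hx0 : 0 < x := hx.1
    have hy0 : 0 < y := hy.1
    have hfac : (x - y) * (x + y) = 0 := by linear_combination hxy
    rcases mul_eq_zero.mp hfac with h | h
    · linarith
    · linarith
  have keymem : ∀ x ∈ T, x ∈ Ioo ((⌊x * κ / π⌋₊ : ℝ) * π / κ)
      (((⌊x * κ / π⌋₊ : ℝ) * π + π / 2) / κ) :=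
    fun x hx => aux_branch hκ hR0 hx.1 hx.2.1
  have hinj : InjOn (fun x => ⌊x * κ / π⌋₊) T := by
    intro x hx y hy hxy
    simp only at hxy
    have hmy := keymem y hy
    rw [← hxy] at hmy
    exact aux_uniq hκ ⌊x * κ / π⌋₊ (keymem x hx) hmy hx.2.1 hy.2.1
  set K := ⌊s * κ / π⌋₊ with hKdef
  have himg : (fun x => ⌊x * κ / π⌋₊) '' T ⊆ Iic K := by
    rintro _ ⟨x, hx, rfl⟩
    simp only [mem_Iic, hKdef]
    apply Nat.floor_le_floor
    gcongr
    exact hx.2.2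
  have hTfin : T.Finite := Set.Finite.of_finite_image ((Set.finite_Iic K).subset himg) hinj
  have hub : T.ncard ≤ K + 1 := by
    have h1 : T.ncard = ((fun x => ⌊x * κ / π⌋₊) '' T).ncard :=
      (Set.ncard_image_of_injOn hinj).symm
    have h2 : ((fun x => ⌊x * κ / π⌋₊) '' T).ncard ≤ (Set.Iic K).ncard :=
      Set.ncard_le_ncard himg (Set.finite_Iic K)
    have h3 : (Set.Iic K).ncard = K + 1 := by
      rw [← Finset.coe_Iic, Set.ncard_coe_finset, Nat.card_Iic]
    omega
  have hKle : (K : ℝ) ≤ s * κ / π := Nat.floor_le (by positivity)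
  have hupper : (T.ncard : ℝ) ≤ (κ / π + 1 / Real.sqrt δ) * s := by
    have h1 : (T.ncard : ℝ) ≤ (K : ℝ) + 1 := by exact_mod_cast hub
    have h2 : (κ / π + 1 / Real.sqrt δ) * s = s * κ / π + s / Real.sqrt δ := by ring
    linarith
  have hlower : (κ / π - 1 / Real.sqrt δ) * s ≤ (T.ncard : ℝ) := by
    have h2 : (κ / π - 1 / Real.sqrt δ) * s = s * κ / π - s / Real.sqrt δ := by ring
    rcases le_or_gt (s * κ / π) 1 with hsmall | hbig
    · have : (0 : ℝ) ≤ (T.ncard : ℝ) := Nat.cast_nonneg _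
      linarith
    · set m := ⌊s * κ / π - 1 / 2⌋₊ with hmdef
      have hmarg : (0 : ℝ) ≤ s * κ / π - 1 / 2 := by linarith
      have hmle : (m : ℝ) ≤ s * κ / π - 1 / 2 := Nat.floor_le hmarg
      have hmlt : s * κ / π - 1 / 2 < (m : ℝ) + 1 := Nat.lt_floor_add_one _
      choose f hf1 hf2 using fun k : ℕ => aux_exist hκ hκR k
      have hfT : ∀ k ≤ m, f k ∈ T := by
        intro k hk
        have hkm : (k : ℝ) ≤ (m : ℝ) := Nat.cast_le.mpr hk
        have hbk : ((k : ℝ) * π + π / 2) / κ ≤ s := by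
          rw [div_le_iff₀ hκ]
          have h5 : (k : ℝ) + 1 / 2 ≤ s * κ / π := by linarith
          have h6 : ((k : ℝ) + 1 / 2) * π ≤ s * κ := (le_div_iff₀ hπ).mp h5
          linarith
        have h1 := hf1 k
        have ha0 : (0 : ℝ) ≤ (k : ℝ) * π / κ := div_nonneg (by positivity) hκ.le
        exact ⟨lt_of_le_of_lt ha0 h1.1, hf2 k, le_of_lt (lt_of_lt_of_le h1.2 hbk)⟩
      have hfinj : InjOn f (Set.Iic m) := by
        intro i hi j hj hij
        by_contra hne
        rcases Nat.lt_or_ge i j with h | h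
        · have h1 := (hf1 i).2
          have h2 := (hf1 j).1
          have hij' : ((i : ℝ) * π + π / 2) / κ ≤ (j : ℝ) * π / κ := by
            gcongr
            have : (i : ℝ) + 1 ≤ (j : ℝ) := by exact_mod_cast h
            nlinarith
          rw [hij] at h1
          linarith
        · have h' : j < i := lt_of_le_of_ne h (fun he => hne he.symm)
          have h1 := (hf1 j).2
          have h2 := (hf1 i).1
          have hij' : ((j : ℝ) * π + π / 2) / κ ≤ (i : ℝ) * π / κ := by
            gcongr
            have : (j : ℝ) + 1 ≤ (i : ℝ) := by exact_mod_cast h'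
            nlinarith
          rw [← hij] at h1
          linarith
      have hlow : m + 1 ≤ T.ncard := by
        have h1 : (f '' Set.Iic m).ncard = (Set.Iic m).ncard := Set.ncard_image_of_injOn hfinj
        have h2 : f '' Set.Iic m ⊆ T := by
          rintro _ ⟨k, hk, rfl⟩
          exact hfT k hk
        have h3 := Set.ncard_le_ncard h2 hTfin
        rw [h1] at h3
        rwa [← Finset.coe_Iic, Set.ncard_coe_finset, Nat.card_Iic] at h3
      have h4 : ((m : ℝ) + 1) ≤ (T.ncard : ℝ) := by exact_mod_cast hlow
      linarith
  rw [hcard]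
  exact ⟨hlower, hupper⟩
end

section
/- For 0 < r_b < R, the function h(z) = ∫_{r_b}^{R} H(z,r)² r² dr, where H(z,r) = (1/r)[sin(√z(R−r))/(R√z) − cos(√z(R−r))], satisfies h(z) → (R−r_b)/2 as z → ∞ and h(z) → (R³ − r_b³)/(3R²) as z → 0⁺; in particular, since h is continuous and positive on (0,∞), inf_{z>0} h(z) > 0. -/
open Real Set Filter

/-- `H(z,r)` from the Smoluchowski/Doi eigenfunction analysis. -/
noncomputable def Hfun (R z r : ℝ) : ℝ :=
  (1 / r) * (Real.sin (Real.sqrt z * (R - r)) / (R * Real.sqrt z) -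
    Real.cos (Real.sqrt z * (R - r)))

/-- `h(z) = ∫_{r_b}^R H(z,r)^2 r^2 dr`. -/
noncomputable def hfun (rb R z : ℝ) : ℝ := ∫ r in rb..R, (Hfun R z r) ^ 2 * r ^ 2

/-- The kernel without the `1/r` factor. -/
noncomputable def Kfun (R z r : ℝ) : ℝ :=
  Real.sin (Real.sqrt z * (R - r)) / (R * Real.sqrt z) - Real.cos (Real.sqrt z * (R - r))

lemma Kfun_cont (R z : ℝ) : Continuous fun r => Kfun R z r ^ 2 := by
  unfold Kfun; fun_prop

lemma hfun_eq_K {rb R : ℝ} (hrb : 0 < rb) (hR : rb < R) (z : ℝ) :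
    hfun rb R z = ∫ r in rb..R, Kfun R z r ^ 2 := by
  unfold hfun
  apply intervalIntegral.integral_congr
  intro r hr
  rw [uIcc_of_le hR.le] at hr
  have hr0 : r ≠ 0 := by have := hr.1; nlinarith
  unfold Hfun Kfun
  field_simp

/-- Closed form of `hfun` for `z > 0`. -/
noncomputable def phi (rb R z : ℝ) : ℝ :=
  ((R - rb) / 2 - Real.sin (2 * Real.sqrt z * (R - rb)) / (4 * Real.sqrt z)) / (R ^ 2 * z)
    - (1 - Real.cos (2 * Real.sqrt z * (R - rb))) / (2 * R * z)
    + (R - rb) / 2 + Real.sin (2 * Real.sqrt z * (R - rb)) / (4 * Real.sqrt z)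

lemma hfun_eq_phi {rb R : ℝ} (hrb : 0 < rb) (hR : rb < R) {z : ℝ} (hz : 0 < z) :
    hfun rb R z = phi rb R z := by
  have hR0 : (0:ℝ) < R := hrb.trans hR
  set s := Real.sqrt z with hsdef
  have hs : 0 < s := Real.sqrt_pos.mpr hz
  have hs2 : s ^ 2 = z := Real.sq_sqrt hz.le
  set G : ℝ → ℝ := fun r =>
    -( ((R - r) / 2 - Real.sin (2 * s * (R - r)) / (4 * s)) / (R ^ 2 * s ^ 2)
      - (1 - Real.cos (2 * s * (R - r))) / (2 * R * s ^ 2)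
      + (R - r) / 2 + Real.sin (2 * s * (R - r)) / (4 * s) ) with hGdef
  have hderiv : ∀ r ∈ uIcc rb R, HasDerivAt G (Kfun R z r ^ 2) r := by
    intro r _
    have h1 : HasDerivAt (fun r : ℝ => 2 * s * (R - r)) (-(2 * s)) r := by
      simpa using ((hasDerivAt_id r).const_sub R).const_mul (2 * s)
    have hsin : HasDerivAt (fun r : ℝ => Real.sin (2 * s * (R - r)))
        (Real.cos (2 * s * (R - r)) * -(2 * s)) r := (Real.hasDerivAt_sin _).comp r h1
    have hcos : HasDerivAt (fun r : ℝ => Real.cos (2 * s * (R - r)))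
        (-Real.sin (2 * s * (R - r)) * -(2 * s)) r := (Real.hasDerivAt_cos _).comp r h1
    have hlin : HasDerivAt (fun r : ℝ => (R - r) / 2) (-(1:ℝ) / 2) r := by
      simpa using ((hasDerivAt_id r).const_sub R).div_const 2
    have hG : HasDerivAt G
        (-( ((-(1:ℝ)/2 - Real.cos (2 * s * (R - r)) * -(2 * s) / (4 * s)) / (R ^ 2 * s ^ 2)
          - (0 - -Real.sin (2 * s * (R - r)) * -(2 * s)) / (2 * R * s ^ 2)
          + -(1:ℝ)/2 + Real.cos (2 * s * (R - r)) * -(2 * s) / (4 * s)) )) r := by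
      exact (((((hlin.sub (hsin.div_const (4 * s))).div_const (R ^ 2 * s ^ 2)).sub
        (((hasDerivAt_const r (1:ℝ)).sub hcos).div_const (2 * R * s ^ 2))).add hlin).add
        (hsin.div_const (4 * s))).neg
    convert hG using 1
    unfold Kfun
    rw [← hsdef]
    rw [mul_assoc, Real.sin_two_mul, Real.cos_two_mul]
    have pyth := Real.sin_sq_add_cos_sq (s * (R - r))
    field_simp
    linear_combination 8 * pyth
  have hint : IntervalIntegrable (fun r => Kfun R z r ^ 2) MeasureTheory.volume rb R :=
    (Kfun_cont R z).intervalIntegrable _ _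
  have hcalc : (∫ r in rb..R, Kfun R z r ^ 2) = G R - G rb :=
    intervalIntegral.integral_eq_sub_of_hasDerivAt hderiv hint
  rw [hfun_eq_K hrb hR, hcalc]
  have hGR : G R = 0 := by simp [hGdef]
  rw [hGR, hGdef]
  unfold phi
  rw [← hsdef, ← hs2]
  ring

lemma phi_tendsto_atTop {rb R : ℝ} (hrb : 0 < rb) (hR : rb < R) :
    Tendsto (phi rb R) atTop (nhds ((R - rb) / 2)) := by
  have hR0 : (0:ℝ) < R := hrb.trans hR
  have hsqrt : Tendsto Real.sqrt atTop atTop := by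
    apply tendsto_atTop_atTop_of_monotone (fun a b h => Real.sqrt_le_sqrt h)
    intro b; exact ⟨b ^ 2, by rw [Real.sqrt_sq_eq_abs]; exact le_abs_self b⟩
  have hs_top : Tendsto (fun z : ℝ => 4 * Real.sqrt z) atTop atTop :=
    hsqrt.const_mul_atTop (by norm_num)
  have hz1 : Tendsto (fun z : ℝ => R ^ 2 * z) atTop atTop :=
    tendsto_id.const_mul_atTop (by positivity)
  have hz2 : Tendsto (fun z : ℝ => 2 * R * z) atTop atTop :=
    tendsto_id.const_mul_atTop (by positivity)
  have h3 : Tendsto (fun z => Real.sin (2 * Real.sqrt z * (R - rb)) / (4 * Real.sqrt z)) atTop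
      (nhds 0) := by
    apply squeeze_zero_norm' (a := fun z => 1 / (4 * Real.sqrt z))
    · filter_upwards [eventually_gt_atTop (0:ℝ)] with z hz
      have h4 : (0:ℝ) < 4 * Real.sqrt z := by positivity
      rw [norm_div, Real.norm_eq_abs, Real.norm_eq_abs, abs_of_pos h4]
      gcongr
      exact abs_le.mpr ⟨Real.neg_one_le_sin _, Real.sin_le_one _⟩
    · simpa only [one_div, Pi.inv_def] using hs_top.inv_tendsto_atTop
  have h2 : Tendsto (fun z => (1 - Real.cos (2 * Real.sqrt z * (R - rb))) / (2 * R * z)) atTop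
      (nhds 0) := by
    apply squeeze_zero_norm' (a := fun z => 2 / (2 * R * z))
    · filter_upwards [eventually_gt_atTop (0:ℝ)] with z hz
      have h4 : (0:ℝ) < 2 * R * z := by positivity
      rw [norm_div, Real.norm_eq_abs, Real.norm_eq_abs, abs_of_pos h4]
      gcongr
      have := Real.neg_one_le_cos (2 * Real.sqrt z * (R - rb))
      have := Real.cos_le_one (2 * Real.sqrt z * (R - rb))
      rw [abs_le]; constructor <;> linarith
    · have := hz2.inv_tendsto_atTop.const_mul (2:ℝ)
      simpa [div_eq_mul_inv] using this
  have h1 : Tendsto (fun z =>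
      ((R - rb) / 2 - Real.sin (2 * Real.sqrt z * (R - rb)) / (4 * Real.sqrt z)) / (R ^ 2 * z))
      atTop (nhds 0) := by
    apply squeeze_zero_norm' (a := fun z => ((R - rb) / 2 + 1) / (R ^ 2 * z))
    · filter_upwards [eventually_ge_atTop (1:ℝ)] with z hz
      have hz0 : (0:ℝ) < z := lt_of_lt_of_le one_pos hz
      have hsq1 : (1:ℝ) ≤ Real.sqrt z := by
        rw [show (1:ℝ) = Real.sqrt 1 by simp]
        exact Real.sqrt_le_sqrt hz
      have h4 : (0:ℝ) < R ^ 2 * z := by positivity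
      rw [norm_div, Real.norm_eq_abs, Real.norm_eq_abs, abs_of_pos h4]
      gcongr
      have hb : |Real.sin (2 * Real.sqrt z * (R - rb)) / (4 * Real.sqrt z)| ≤ 1 := by
        rw [abs_div, abs_of_pos (by positivity : (0:ℝ) < 4 * Real.sqrt z),
          div_le_one (by positivity)]
        calc |Real.sin _| ≤ 1 := abs_le.mpr ⟨Real.neg_one_le_sin _, Real.sin_le_one _⟩
          _ ≤ 4 * Real.sqrt z := by nlinarith
      calc |(R - rb) / 2 - Real.sin (2 * Real.sqrt z * (R - rb)) / (4 * Real.sqrt z)|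
          ≤ |(R - rb) / 2| + |Real.sin (2 * Real.sqrt z * (R - rb)) / (4 * Real.sqrt z)| :=
            abs_sub _ _
        _ ≤ (R - rb) / 2 + 1 := by
            rw [abs_of_nonneg (by linarith : (0:ℝ) ≤ (R - rb) / 2)]
            linarith
    · have := hz1.inv_tendsto_atTop.const_mul ((R - rb) / 2 + 1)
      simpa [div_eq_mul_inv] using this
  have := ((h1.sub h2).add (tendsto_const_nhds (α := ℝ) (x := (R - rb) / 2))).add h3
  delta phi
  simpa using this

lemma K_tendsto_zero {rb R : ℝ} (hrb : 0 < rb) (hR : rb < R) :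
    Tendsto (fun z => ∫ r in rb..R, Kfun R z r ^ 2) (nhdsWithin 0 (Ioi 0))
      (nhds ((R ^ 3 - rb ^ 3) / (3 * R ^ 2))) := by
  have hR0 : (0:ℝ) < R := hrb.trans hR
  have hval : (∫ r in rb..R, r ^ 2 / R ^ 2) = (R ^ 3 - rb ^ 3) / (3 * R ^ 2) := by
    rw [intervalIntegral.integral_div, integral_pow]
    norm_num [div_div]
  rw [← hval]
  apply intervalIntegral.tendsto_integral_filter_of_dominated_convergence (bound := fun _ => 4)
  · filter_upwards with z
    exact ((Kfun_cont R z)).aestronglyMeasurable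
  · filter_upwards [self_mem_nhdsWithin] with z hz
    filter_upwards with r hr
    rw [uIoc_of_le hR.le] at hr
    have hz0 : (0:ℝ) < z := hz
    have hs : 0 < Real.sqrt z := Real.sqrt_pos.mpr hz0
    have hu0 : 0 ≤ R - r := by linarith [hr.2]
    have huR : R - r ≤ R := by linarith [hrb.trans hr.1]
    have hKb : |Kfun R z r| ≤ 2 := by
      unfold Kfun
      calc |Real.sin (Real.sqrt z * (R - r)) / (R * Real.sqrt z) -
            Real.cos (Real.sqrt z * (R - r))|
          ≤ |Real.sin (Real.sqrt z * (R - r)) / (R * Real.sqrt z)| +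
            |Real.cos (Real.sqrt z * (R - r))| := abs_sub _ _
        _ ≤ 1 + 1 := by
            gcongr
            · rw [abs_div, abs_of_pos (by positivity : (0:ℝ) < R * Real.sqrt z),
                div_le_one (by positivity)]
              calc |Real.sin (Real.sqrt z * (R - r))| ≤ |Real.sqrt z * (R - r)| :=
                    Real.abs_sin_le_abs
                _ = Real.sqrt z * (R - r) := abs_of_nonneg (by positivity)
                _ ≤ R * Real.sqrt z := by nlinarith
            · exact abs_le.mpr ⟨Real.neg_one_le_cos _, Real.cos_le_one _⟩
        _ = 2 := by norm_num
    rw [Real.norm_eq_abs, abs_pow]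
    nlinarith [hKb, abs_nonneg (Kfun R z r)]
  · exact intervalIntegrable_const
  · filter_upwards with r hr
    rw [uIoc_of_le hR.le] at hr
    rcases eq_or_lt_of_le hr.2 with hrR | hrR
    · subst hrR
      have hK1 : ∀ z : ℝ, Kfun r z r ^ 2 = 1 := by
        intro z; unfold Kfun; simp
      simp only [hK1]
      have : r ^ 2 / r ^ 2 = 1 := by
        have hr0 : r ≠ 0 := by have := hr.1; nlinarith
        field_simp
      rw [this]
      exact tendsto_const_nhds
    · have hu : 0 < R - r := by linarith
      have hsinc : Tendsto (fun x => Real.sin x / x) (nhdsWithin 0 (Ioi 0)) (nhds 1) := by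
        have hd := Real.hasDerivAt_sin 0
        rw [hasDerivAt_iff_tendsto_slope] at hd
        have hsl : slope Real.sin 0 = fun x => Real.sin x / x := by
          funext x; simp [slope_def_field]
        rw [hsl, Real.cos_zero] at hd
        exact hd.mono_left (nhdsWithin_mono 0 (fun x hx => ne_of_gt hx))
      have hA : Tendsto (fun z => Real.sqrt z * (R - r)) (nhdsWithin 0 (Ioi 0))
          (nhdsWithin 0 (Ioi 0)) := by
        rw [tendsto_nhdsWithin_iff]
        constructor
        · have h0 : Tendsto Real.sqrt (nhds 0) (nhds 0) :=
            Real.continuous_sqrt.tendsto' 0 0 Real.sqrt_zero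
          simpa using (h0.mono_left nhdsWithin_le_nhds).mul_const (R - r)
        · filter_upwards [self_mem_nhdsWithin] with z hz
          exact mul_pos (Real.sqrt_pos.mpr hz) hu
      have hA' : Tendsto (fun z => Real.sqrt z * (R - r)) (nhdsWithin 0 (Ioi 0)) (nhds 0) :=
        hA.mono_right nhdsWithin_le_nhds
      have hB : Tendsto (fun z => Real.sin (Real.sqrt z * (R - r)) / (Real.sqrt z * (R - r)))
          (nhdsWithin 0 (Ioi 0)) (nhds 1) := hsinc.comp hA
      have hC : Tendsto (fun z => Real.cos (Real.sqrt z * (R - r))) (nhdsWithin 0 (Ioi 0))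
          (nhds 1) := (Real.continuous_cos.tendsto' 0 1 (by simp)).comp hA'
      have Main : Tendsto (fun z =>
          (Real.sin (Real.sqrt z * (R - r)) / (Real.sqrt z * (R - r)) * ((R - r) / R) -
            Real.cos (Real.sqrt z * (R - r))) ^ 2) (nhdsWithin 0 (Ioi 0))
          (nhds ((1 * ((R - r) / R) - 1) ^ 2)) :=
        ((hB.mul_const ((R - r) / R)).sub hC).pow 2
      have heq : (fun z =>
          (Real.sin (Real.sqrt z * (R - r)) / (Real.sqrt z * (R - r)) * ((R - r) / R) -
            Real.cos (Real.sqrt z * (R - r))) ^ 2) =ᶠ[nhdsWithin 0 (Ioi 0)]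
          fun z => Kfun R z r ^ 2 := by
        filter_upwards [self_mem_nhdsWithin] with z hz
        have hs : (0:ℝ) < Real.sqrt z := Real.sqrt_pos.mpr hz
        unfold Kfun
        congr 2
        field_simp
      have := Main.congr' heq
      convert this using 2
      field_simp
      ring

lemma K_integral_pos {rb R : ℝ} (hrb : 0 < rb) (hR : rb < R) {z : ℝ} (hz : 0 < z) :
    0 < ∫ r in rb..R, Kfun R z r ^ 2 := by
  have hcont := Kfun_cont R z
  set g := fun r => Kfun R z r ^ 2 with hg
  have hgR : g R = 1 := by simp [hg, Kfun]
  have hev : ∀ᶠ r in nhds R, 1 / 2 < g r := by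
    have ht : Tendsto g (nhds R) (nhds 1) := by rw [← hgR]; exact hcont.continuousAt
    exact ht.eventually (eventually_gt_nhds (by norm_num))
  rw [Metric.eventually_nhds_iff] at hev
  obtain ⟨ε, hε, hball⟩ := hev
  set c := max rb (R - ε / 2) with hc
  have hcrb : rb ≤ c := le_max_left _ _
  have hcR : c < R := max_lt hR (by linarith)
  have hcε : R - c ≤ ε / 2 := by
    have := le_max_right rb (R - ε / 2)
    rw [← hc] at this; linarith
  have int1 : IntervalIntegrable g MeasureTheory.volume rb c := hcont.intervalIntegrable _ _
  have int2 : IntervalIntegrable g MeasureTheory.volume c R := hcont.intervalIntegrable _ _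
  have split : (∫ r in rb..R, g r) = (∫ r in rb..c, g r) + ∫ r in c..R, g r :=
    (intervalIntegral.integral_add_adjacent_intervals int1 int2).symm
  have h1 : 0 ≤ ∫ r in rb..c, g r :=
    intervalIntegral.integral_nonneg hcrb (fun x _ => sq_nonneg _)
  have h2 : (R - c) * (1 / 2) ≤ ∫ r in c..R, g r := by
    have hm := intervalIntegral.integral_mono_on (f := fun _ : ℝ => (1:ℝ) / 2) (g := g)
      hcR.le intervalIntegrable_const int2 ?_
    · simpa [smul_eq_mul, mul_comm] using hm
    · intro x hx
      refine le_of_lt (hball ?_)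
      rw [Real.dist_eq, abs_of_nonpos (by linarith [hx.2])]
      have : R - x ≤ R - c := by linarith [hx.1]
      linarith
  rw [split]
  nlinarith

lemma phi_contOn {rb R : ℝ} (hrb : 0 < rb) (hR : rb < R) :
    ContinuousOn (phi rb R) (Ioi 0) := by
  have hR0 : (0:ℝ) < R := hrb.trans hR
  intro z hz
  have hz0 : (0:ℝ) < z := hz
  have hs : 0 < Real.sqrt z := Real.sqrt_pos.mpr hz0
  apply ContinuousAt.continuousWithinAt
  unfold phi
  have h1 : ContinuousAt (fun z => Real.sin (2 * Real.sqrt z * (R - rb))) z := by fun_prop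
  have h2 : ContinuousAt (fun z => Real.cos (2 * Real.sqrt z * (R - rb))) z := by fun_prop
  have hd1 : ContinuousAt (fun z : ℝ => 4 * Real.sqrt z) z := by fun_prop
  have hd2 : ContinuousAt (fun z : ℝ => R ^ 2 * z) z := by fun_prop
  have hd3 : ContinuousAt (fun z : ℝ => 2 * R * z) z := by fun_prop
  exact (((((continuousAt_const.sub (h1.div hd1 (by positivity))).div hd2 (by positivity)).sub
    ((continuousAt_const.sub h2).div hd3 (by positivity))).add continuousAt_const).add
    (h1.div hd1 (by positivity)))

theorem stmt_9 (rb R : ℝ) (hrb : 0 < rb) (hR : rb < R) :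
    Tendsto (hfun rb R) atTop (nhds ((R - rb) / 2)) ∧
    Tendsto (hfun rb R) (nhdsWithin 0 (Ioi 0)) (nhds ((R ^ 3 - rb ^ 3) / (3 * R ^ 2))) ∧
    ∃ A > 0, ∀ z > 0, A ≤ hfun rb R z := by
  have hR0 : (0:ℝ) < R := hrb.trans hR
  have hpos : ∀ z > 0, 0 < hfun rb R z := by
    intro z hz
    rw [hfun_eq_K hrb hR]
    exact K_integral_pos hrb hR hz
  have T1 : Tendsto (hfun rb R) atTop (nhds ((R - rb) / 2)) := by
    apply (phi_tendsto_atTop hrb hR).congr'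
    filter_upwards [eventually_gt_atTop (0:ℝ)] with z hz
    exact (hfun_eq_phi hrb hR hz).symm
  have T2 : Tendsto (hfun rb R) (nhdsWithin 0 (Ioi 0))
      (nhds ((R ^ 3 - rb ^ 3) / (3 * R ^ 2))) := by
    apply (K_tendsto_zero hrb hR).congr
    intro z
    exact (hfun_eq_K hrb hR z).symm
  refine ⟨T1, T2, ?_⟩
  have hcont : ContinuousOn (hfun rb R) (Ioi 0) :=
    (phi_contOn hrb hR).congr (fun z hz => hfun_eq_phi hrb hR hz)
  have hc0 : 0 < (R ^ 3 - rb ^ 3) / (3 * R ^ 2) := by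
    have : rb ^ 3 < R ^ 3 := by nlinarith [mul_pos hrb (hrb.trans hR), mul_pos (mul_pos hrb hrb) (hrb.trans hR), sq_nonneg (R - rb), sq_nonneg (R + rb)]
    apply div_pos (by linarith) (by positivity)
  set c0 := (R ^ 3 - rb ^ 3) / (3 * R ^ 2) with hc0def
  have e1 : ∀ᶠ z in atTop, (R - rb) / 4 < hfun rb R z :=
    T1.eventually (eventually_gt_nhds (by linarith))
  rw [eventually_atTop] at e1
  obtain ⟨z1, hz1⟩ := e1
  set z1' := max z1 1 with hz1'def
  have hz1'pos : (0:ℝ) < z1' := lt_of_lt_of_le one_pos (le_max_right _ _)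
  have e2 : ∀ᶠ z in nhdsWithin 0 (Ioi 0), c0 / 2 < hfun rb R z :=
    T2.eventually (eventually_gt_nhds (by linarith))
  rw [Filter.eventually_iff] at e2
  obtain ⟨u, hu, hsub⟩ := mem_nhdsGT_iff_exists_Ioo_subset.mp e2
  have hu0 : (0:ℝ) < u := hu
  set z0 := min (u / 2) z1' with hz0def
  have hz0pos : 0 < z0 := lt_min (by linarith) hz1'pos
  have hz0le : z0 ≤ z1' := min_le_right _ _
  have hKsub : Icc z0 z1' ⊆ Ioi 0 := fun x hx => lt_of_lt_of_le hz0pos hx.1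
  obtain ⟨xm, hxmK, hxmin⟩ := isCompact_Icc.exists_isMinOn ⟨z0, left_mem_Icc.mpr hz0le⟩
    (hcont.mono hKsub)
  have hm : 0 < hfun rb R xm := hpos xm (hKsub hxmK)
  refine ⟨min (min ((R - rb) / 4) (c0 / 2)) (hfun rb R xm), ?_, ?_⟩
  · apply lt_min (lt_min (by linarith) (by linarith)) hm
  · intro z hz
    by_cases hle : z ≤ z1'
    · by_cases hge : z0 ≤ z
      · have : hfun rb R xm ≤ hfun rb R z := hxmin ⟨hge, hle⟩
        calc min (min ((R - rb) / 4) (c0 / 2)) (hfun rb R xm) ≤ hfun rb R xm :=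
              min_le_right _ _
          _ ≤ hfun rb R z := this
      · push_neg at hge
        have hzu : z ∈ Ioo (0:ℝ) u := ⟨hz, by
          have : z0 ≤ u / 2 := min_le_left _ _
          linarith⟩
        have : c0 / 2 < hfun rb R z := hsub hzu
        calc min (min ((R - rb) / 4) (c0 / 2)) (hfun rb R xm)
            ≤ c0 / 2 := le_trans (min_le_left _ _) (min_le_right _ _)
          _ ≤ hfun rb R z := this.le
    · push_neg at hle
      have : (R - rb) / 4 < hfun rb R z := hz1 z (le_of_lt (lt_of_le_of_lt (le_max_left _ _) hle))
      calc min (min ((R - rb) / 4) (c0 / 2)) (hfun rb R xm)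
          ≤ (R - rb) / 4 := le_trans (min_le_left _ _) (min_le_left _ _)
        _ ≤ hfun rb R z := this.le
end

section
/- Let r_b > 0, R > r_b, D > 0, λ > 0, and λ̂ = λ/D. The function T_Doi given piecewise by u⁻(r₀) = 1/(Dλ̂) + (sinh(√λ̂ r₀)/r₀)·(R³−r_b³)/(3D(r_b√λ̂ cosh(√λ̂ r_b) − sinh(√λ̂ r_b))) for 0 < r₀ < r_b, and u⁺(r₀) = (r_b²−r₀²)/(6D) + (R³/(3D))(1/r_b − 1/r₀) + 1/(Dλ̂) + (sinh(√λ̂ r_b)/r_b)·(R³−r_b³)/(3D(r_b√λ̂ cosh(√λ̂ r_b) − sinh(√λ̂ r_b))) for r_b < r₀ < R, satisfies the ODE Δ_{r₀}T − λ̂·1_{[0,r_b]}(r₀)·T = −1/D on (0,R)∖{r_b} with T'(R) = 0, where Δ_r T = T'' + (2/r)T'. -/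
open Real Set

noncomputable def uMinus (rb R D lamHat r₀ : ℝ) : ℝ :=
  1 / (D * lamHat) +
    (Real.sinh (Real.sqrt lamHat * r₀) / r₀) *
      ((R ^ 3 - rb ^ 3) /
        (3 * D * (rb * Real.sqrt lamHat * Real.cosh (Real.sqrt lamHat * rb) -
          Real.sinh (Real.sqrt lamHat * rb))))

noncomputable def uPlus (rb R D lamHat r₀ : ℝ) : ℝ :=
  (rb ^ 2 - r₀ ^ 2) / (6 * D) + R ^ 3 / (3 * D) * (1 / rb - 1 / r₀) + 1 / (D * lamHat) +
    (Real.sinh (Real.sqrt lamHat * rb) / rb) *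
      ((R ^ 3 - rb ^ 3) /
        (3 * D * (rb * Real.sqrt lamHat * Real.cosh (Real.sqrt lamHat * rb) -
          Real.sinh (Real.sqrt lamHat * rb))))

lemma hasDerivAt_inner_gen (a c K : ℝ) {r : ℝ} (hr : r ≠ 0) :
    HasDerivAt (fun x => c + Real.sinh (a * x) / x * K)
      ((a * Real.cosh (a * r) / r - Real.sinh (a * r) / r ^ 2) * K) r := by
  have h := ((((hasDerivAt_id r).const_mul a).sinh.div (hasDerivAt_id r) hr).mul_const K).const_add c
  refine h.congr_deriv ?_
  simp only [id]
  field_simp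

lemma hasDerivAt_inner_deriv (a K : ℝ) {r : ℝ} (hr : r ≠ 0) :
    HasDerivAt (fun x => (a * Real.cosh (a * x) / x - Real.sinh (a * x) / x ^ 2) * K)
      ((a ^ 2 * Real.sinh (a * r) / r - 2 * a * Real.cosh (a * r) / r ^ 2 +
        2 * Real.sinh (a * r) / r ^ 3) * K) r := by
  have h1 := ((((hasDerivAt_id r).const_mul a).cosh).const_mul a).div (hasDerivAt_id r) hr
  have h2 := (((hasDerivAt_id r).const_mul a).sinh).div (hasDerivAt_pow 2 r) (pow_ne_zero 2 hr)
  have h := (h1.sub h2).mul_const K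
  refine h.congr_deriv ?_
  simp only [id]
  field_simp
  ring

lemma hasDerivAt_outer_gen (rb R D c e : ℝ) (hD : D ≠ 0) {r : ℝ} (hr : r ≠ 0) :
    HasDerivAt (fun x => (rb ^ 2 - x ^ 2) / (6 * D) + R ^ 3 / (3 * D) * (1 / rb - 1 / x) + c + e)
      (-(r / (3 * D)) + R ^ 3 / (3 * D * r ^ 2)) r := by
  have h1 := ((hasDerivAt_pow 2 r).const_sub (rb ^ 2)).div_const (6 * D)
  have h2 := (((hasDerivAt_const r (1:ℝ)).div (hasDerivAt_id r) hr).const_sub (1 / rb)).const_mul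
      (R ^ 3 / (3 * D))
  have h := ((h1.add h2).add_const c).add_const e
  refine h.congr_deriv ?_
  simp only [id]
  field_simp
  ring

lemma hasDerivAt_outer_deriv (R D : ℝ) (hD : D ≠ 0) {r : ℝ} (hr : r ≠ 0) :
    HasDerivAt (fun x => -(x / (3 * D)) + R ^ 3 / (3 * D * x ^ 2))
      (-(1 / (3 * D)) - 2 * R ^ 3 / (3 * D * r ^ 3)) r := by
  have h1 := ((hasDerivAt_id r).div_const (3 * D)).neg
  have h2 := (hasDerivAt_const r (R ^ 3)).div ((hasDerivAt_pow 2 r).const_mul (3 * D))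
      (mul_ne_zero (mul_ne_zero three_ne_zero hD) (pow_ne_zero 2 hr))
  refine (h1.add h2).congr_deriv ?_
  field_simp
  ring

theorem stmt_13 (rb R D lam : ℝ) (hrb : 0 < rb) (hR : rb < R) (hD : 0 < D) (hlam : 0 < lam) :
    let lamHat := lam / D
    let T : ℝ → ℝ := fun r₀ =>
      if r₀ < rb then uMinus rb R D lamHat r₀ else uPlus rb R D lamHat r₀
    (∀ r₀ ∈ Ioo (0 : ℝ) R, r₀ ≠ rb →
        deriv (deriv T) r₀ + (2 / r₀) * deriv T r₀ -
            lamHat * (Set.indicator (Set.Icc 0 rb) (fun _ => (1 : ℝ)) r₀) * T r₀ =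
          -(1 / D)) ∧
    deriv T R = 0 := by
  intro lamHat T
  have hD' : D ≠ 0 := hD.ne'
  have hlamHat : 0 < lamHat := div_pos hlam hD
  set a := Real.sqrt lamHat with ha
  have ha2 : a ^ 2 = lamHat := Real.sq_sqrt hlamHat.le
  set K : ℝ := (R ^ 3 - rb ^ 3) /
      (3 * D * (rb * a * Real.cosh (a * rb) - Real.sinh (a * rb))) with hK
  set c : ℝ := 1 / (D * lamHat) with hc
  set e : ℝ := Real.sinh (a * rb) / rb * K with he
  have huM : uMinus rb R D lamHat = fun x => c + Real.sinh (a * x) / x * K := rfl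
  have huP : uPlus rb R D lamHat = fun x =>
      (rb ^ 2 - x ^ 2) / (6 * D) + R ^ 3 / (3 * D) * (1 / rb - 1 / x) + c + e := rfl
  constructor
  · rintro r₀ ⟨hr0, hrR⟩ hne
    have hr0' : r₀ ≠ 0 := hr0.ne'
    rcases lt_or_gt_of_ne hne with hlt | hgt
    · -- inner branch
      have hevT : T =ᶠ[nhds r₀] uMinus rb R D lamHat :=
        Filter.eventuallyEq_of_mem (Iio_mem_nhds hlt) (fun x hx => if_pos hx)
      have hevd : deriv (uMinus rb R D lamHat) =ᶠ[nhds r₀]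
          (fun x => (a * Real.cosh (a * x) / x - Real.sinh (a * x) / x ^ 2) * K) :=
        Filter.eventuallyEq_of_mem (Ioi_mem_nhds hr0) (fun x hx => by
          rw [huM]; exact (hasDerivAt_inner_gen a c K (ne_of_gt hx)).deriv)
      have hd1 : deriv T r₀ = (a * Real.cosh (a * r₀) / r₀ - Real.sinh (a * r₀) / r₀ ^ 2) * K := by
        rw [hevT.deriv_eq, huM]; exact (hasDerivAt_inner_gen a c K hr0').deriv
      have hd2 : deriv (deriv T) r₀ = (a ^ 2 * Real.sinh (a * r₀) / r₀ -
          2 * a * Real.cosh (a * r₀) / r₀ ^ 2 + 2 * Real.sinh (a * r₀) / r₀ ^ 3) * K := by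
        rw [(hevT.deriv.trans hevd).deriv_eq]
        exact (hasDerivAt_inner_deriv a K hr0').deriv
      have hind : Set.indicator (Set.Icc 0 rb) (fun _ => (1 : ℝ)) r₀ = 1 :=
        Set.indicator_of_mem (Set.mem_Icc.mpr ⟨hr0.le, hlt.le⟩) _
      have hTv : T r₀ = c + Real.sinh (a * r₀) / r₀ * K := by
        show (if r₀ < rb then _ else _) = _
        rw [if_pos hlt, huM]
      rw [hd1, hd2, hind, hTv, ha2, hc]
      have hlamHat' : lamHat ≠ 0 := hlamHat.ne'
      field_simp
      ring
    · -- outer branch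
      have hevT : T =ᶠ[nhds r₀] uPlus rb R D lamHat :=
        Filter.eventuallyEq_of_mem (Ioi_mem_nhds hgt)
          (fun x hx => if_neg (not_lt.mpr (le_of_lt hx)))
      have hevd : deriv (uPlus rb R D lamHat) =ᶠ[nhds r₀]
          (fun x => -(x / (3 * D)) + R ^ 3 / (3 * D * x ^ 2)) :=
        Filter.eventuallyEq_of_mem (Ioi_mem_nhds hr0) (fun x hx => by
          rw [huP]; exact (hasDerivAt_outer_gen rb R D c e hD' (ne_of_gt hx)).deriv)
      have hd1 : deriv T r₀ = -(r₀ / (3 * D)) + R ^ 3 / (3 * D * r₀ ^ 2) := by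
        rw [hevT.deriv_eq, huP]; exact (hasDerivAt_outer_gen rb R D c e hD' hr0').deriv
      have hd2 : deriv (deriv T) r₀ = -(1 / (3 * D)) - 2 * R ^ 3 / (3 * D * r₀ ^ 3) := by
        rw [(hevT.deriv.trans hevd).deriv_eq]
        exact (hasDerivAt_outer_deriv R D hD' hr0').deriv
      have hind : Set.indicator (Set.Icc 0 rb) (fun _ => (1 : ℝ)) r₀ = 0 :=
        Set.indicator_of_notMem (fun h => absurd h.2 (not_le.mpr hgt)) _
      rw [hd1, hd2, hind]
      field_simp
      ring
  · -- Neumann condition at R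
    have hRne : R ≠ 0 := (hrb.trans hR).ne'
    have hevT : T =ᶠ[nhds R] uPlus rb R D lamHat :=
      Filter.eventuallyEq_of_mem (Ioi_mem_nhds hR)
        (fun x hx => if_neg (not_lt.mpr (le_of_lt hx)))
    have hd : deriv T R = -(R / (3 * D)) + R ^ 3 / (3 * D * R ^ 2) := by
      rw [hevT.deriv_eq, huP]; exact (hasDerivAt_outer_gen rb R D c e hD' hRne).deriv
    rw [hd]
    field_simp
    ring
end

section
/- Let r_b, R, D, λ > 0 with r_b < R and λ̂ = λ/D. The difference of mean binding times |⟨T_Doi⟩(r₀) − ⟨T_Smol⟩(r₀)| = |1/(Dλ̂) + (sinh(√λ̂ r_b)/r_b)·(R³ − r_b³)/(3D(r_b√λ̂ cosh(√λ̂ r_b) − sinh(√λ̂ r_b)))| is O(λ^{−1/2}) as λ → ∞; i.e., there exist constants C, λ₀ (depending on r_b, R, D) such that for λ ≥ λ₀ this quantity is at most C/√λ. -/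
open Real

theorem stmt_15 (rb R D : ℝ) (hrb : 0 < rb) (hR : rb < R) (hD : 0 < D) :
    ∃ C > 0, ∃ lam₀ > 0, ∀ lam ≥ lam₀,
      |1 / (D * (lam / D)) +
          (Real.sinh (Real.sqrt (lam / D) * rb) / rb) *
            ((R ^ 3 - rb ^ 3) /
              (3 * D * (rb * Real.sqrt (lam / D) * Real.cosh (Real.sqrt (lam / D) * rb) -
                Real.sinh (Real.sqrt (lam / D) * rb))))| ≤ C / Real.sqrt lam := by
  have hR3 : 0 < R ^ 3 - rb ^ 3 := sub_pos.mpr (pow_lt_pow_left₀ hR hrb.le three_ne_zero)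
  have hsD : 0 < Real.sqrt D := Real.sqrt_pos.mpr hD
  set C2 : ℝ := 2 * (R ^ 3 - rb ^ 3) * Real.sqrt D / (3 * D * rb ^ 2) with hC2
  have hC2pos : 0 < C2 := by positivity
  refine ⟨1 + C2, by positivity, max 1 (4 * D / rb ^ 2), by positivity, ?_⟩
  intro lam hlam
  have hlam1 : (1 : ℝ) ≤ lam := le_trans (le_max_left _ _) hlam
  have hlam2 : 4 * D / rb ^ 2 ≤ lam := le_trans (le_max_right _ _) hlam
  have hlampos : 0 < lam := by linarith
  set s := Real.sqrt (lam / D) with hs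
  set x := s * rb with hx
  have hseq : s = Real.sqrt lam / Real.sqrt D := Real.sqrt_div hlampos.le D
  have hsqlam : 1 ≤ Real.sqrt lam := by
    rw [show (1:ℝ) = Real.sqrt 1 by simp]
    exact Real.sqrt_le_sqrt hlam1
  have hsqlampos : 0 < Real.sqrt lam := by linarith
  -- x ≥ 2
  have hx2 : 2 ≤ x := by
    have h1 : (2 / rb) ≤ s := by
      rw [hs]
      have : (2 / rb) = Real.sqrt (4 * D / rb ^ 2 / D) := by
        rw [show 4 * D / rb ^ 2 / D = (2 / rb) ^ 2 by field_simp; ring]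
        rw [Real.sqrt_sq (by positivity)]
      rw [this]
      apply Real.sqrt_le_sqrt
      gcongr
    calc (2:ℝ) = 2 / rb * rb := by field_simp
    _ ≤ s * rb := by apply mul_le_mul_of_nonneg_right h1 hrb.le
  have hxpos : 0 < x := by linarith
  have hsinh : 0 < Real.sinh x := by
    have := Real.exp_lt_exp.mpr (show -x < x by linarith)
    rw [Real.sinh_eq]; linarith
  have hcosh : Real.sinh x ≤ Real.cosh x := by
    have := Real.exp_pos (-x)
    rw [Real.sinh_eq, Real.cosh_eq]; linarith
  set dn := x * Real.cosh x - Real.sinh x with hdn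
  have hdnge : x / 2 * Real.sinh x ≤ dn := by
    rw [hdn]; nlinarith
  have hdnpos : 0 < dn := lt_of_lt_of_le (by nlinarith) hdnge
  -- rewrite the goal
  have hrbs : rb * s = x := by rw [hx]; ring
  have hDlam : D * (lam / D) = lam := by field_simp
  rw [hrbs, hDlam]
  have hterm2 : Real.sinh x / rb * ((R ^ 3 - rb ^ 3) / (3 * D * dn)) ≤ C2 / Real.sqrt lam := by
    have hratio : Real.sinh x / dn ≤ 2 / x := by
      rw [div_le_div_iff₀ hdnpos hxpos]
      nlinarith
    have h1 : Real.sinh x / rb * ((R ^ 3 - rb ^ 3) / (3 * D * dn))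
        = (R ^ 3 - rb ^ 3) / (3 * D * rb) * (Real.sinh x / dn) := by
      field_simp
    have h2 : (R ^ 3 - rb ^ 3) / (3 * D * rb) * (2 / x) = C2 / Real.sqrt lam := by
      rw [hC2, hx, hseq]
      field_simp
    rw [h1, ← h2]
    apply mul_le_mul_of_nonneg_left hratio (by positivity)
  have hterm1 : 1 / lam ≤ 1 / Real.sqrt lam := by
    have h : Real.sqrt lam ≤ lam := by nlinarith [Real.sq_sqrt hlampos.le]
    exact one_div_le_one_div_of_le hsqlampos h
  have hnn : 0 ≤ 1 / lam + Real.sinh x / rb * ((R ^ 3 - rb ^ 3) / (3 * D * dn)) := by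
    positivity
  rw [abs_of_nonneg hnn]
  have : (1 + C2) / Real.sqrt lam = 1 / Real.sqrt lam + C2 / Real.sqrt lam := by ring
  rw [this]
  exact add_le_add hterm1 hterm2
end
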